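/- There exists a computable 2-coloring c of the nonempty finite subsets of ℕ such that for every computably enumerable family 𝒲 of finite subsets of ℕ containing infinitely many pairwise disjoint elements, the coloring c is not constant on NU(𝒲), the set of nonempty unions of finitely many members of 𝒲. -/

import Mathlib

/-- The set of nonempty unions of finitely many members of `𝒮`. -/
def NU (𝒮 : Set (Finset ℕ)) : Set (Finset ℕ) :=
  {T | T.Nonempty ∧ ∃ F : Finset (Finset ℕ), ↑F ⊆ 𝒮 ∧ T = F.sup id}

/-- `𝒮` is an IP family: closed under finite unions and containing an infinite
pairwise disjoint subfamily. -/
def IsIP (𝒮 : Set (Finset ℕ)) : Prop :=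
  (∀ A ∈ 𝒮, ∀ B ∈ 𝒮, A ∪ B ∈ 𝒮) ∧
    ∃ 𝒟 ⊆ 𝒮, 𝒟.Infinite ∧ 𝒟.Pairwise Disjoint

/-- `𝒮` generates an IP set: it contains infinitely many pairwise disjoint elements. -/
def GeneratesIP (𝒮 : Set (Finset ℕ)) : Prop :=
  ∃ 𝒟 ⊆ 𝒮, 𝒟.Infinite ∧ 𝒟.Pairwise Disjoint

/-- `𝒮 − ℬ`: the members of `𝒮` disjoint from every member of `ℬ`. -/
def SMinus (𝒮 ℬ : Set (Finset ℕ)) : Set (Finset ℕ) :=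
  {T ∈ 𝒮 | ∀ B ∈ ℬ, Disjoint T B}

/-- `𝒟` half-matches `B` with respect to the coloring `c`. -/
def HalfMatch {α : Type*} (c : Finset ℕ → α) (𝒟 : Set (Finset ℕ)) (B : Finset ℕ) : Prop :=
  ∃ D ∈ 𝒟, Disjoint D B ∧ c B = c (D ∪ B)

/-- `𝒟` full-matches `B` with respect to the coloring `c`. -/
def FullMatch {α : Type*} (c : Finset ℕ → α) (𝒟 : Set (Finset ℕ)) (B : Finset ℕ) : Prop :=
  ∃ D ∈ 𝒟, Disjoint D B ∧ c D = c B ∧ c B = c (D ∪ B)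

/-- `𝒲` is computably enumerable (Σ⁰₁). -/
def CEFam (𝒲 : Set (Finset ℕ)) : Prop :=
  ∃ R : ℕ → Finset ℕ → Bool, Computable₂ R ∧ 𝒲 = {Z | ∃ x, R x Z = true}




namespace NCM
open Nat List

/-- binary code of a finset -/
def bc (B : Finset ℕ) : ℕ := ∑ i ∈ B, 2^i

/-- finset from binary code -/
def fb (n : ℕ) : Finset ℕ := n.bitIndices.toFinset

lemma fb_bc (B : Finset ℕ) : fb (bc B) = B := Finset.toFinset_bitIndices_twoPowSum B

lemma bc_fb (n : ℕ) : bc (fb n) = n := Finset.twoPowSum_toFinset_bitIndices n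

lemma bc_empty : bc ∅ = 0 := rfl

lemma bc_ne_zero {B : Finset ℕ} (h : B.Nonempty) : bc B ≠ 0 := by
  obtain ⟨i, hi⟩ := h
  have : 2^i ≤ bc B := Finset.single_le_sum (f := fun i => 2^i) (by intro j _; positivity) hi
  have h2 : 0 < 2^i := Nat.pow_pos (by norm_num)
  omega

lemma fb_nonempty {n : ℕ} (h : n ≠ 0) : (fb n).Nonempty := by
  by_contra hc
  rw [Finset.not_nonempty_iff_eq_empty] at hc
  have := bc_fb n
  rw [hc, bc_empty] at this
  exact h this.symm

lemma mem_lt_bc {B : Finset ℕ} {i : ℕ} (hi : i ∈ B) : i < bc B := by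
  have h1 : 2^i ≤ bc B := Finset.single_le_sum (f := fun i => 2^i) (by intro j _; positivity) hi
  exact lt_of_lt_of_le (Nat.lt_two_pow_self) h1

lemma bc_dvd {B : Finset ℕ} {k : ℕ} (h : ∀ i ∈ B, k ≤ i) : 2^k ∣ bc B := by
  refine Finset.dvd_sum ?_
  intro i hi
  exact pow_dvd_pow 2 (h i hi)

lemma bc_union {B D : Finset ℕ} (h : Disjoint B D) : bc (B ∪ D) = bc B + bc D :=
  Finset.sum_union h



def enum (e s b : ℕ) : Bool :=
  (Nat.Partrec.Code.evaln s (Denumerable.ofNat Nat.Partrec.Code e) b).isSome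

def bound (K : List (ℕ × ℕ)) (e : ℕ) : ℕ :=
  K.foldr (fun p r => if p.1 < e then max p.2 r else r) 0

def goodb (s : ℕ) (K : List (ℕ × ℕ)) (e b : ℕ) : Bool :=
  !(b == 0) && (b % 2^(bound K e + 1) == 0) && enum e s b

def wit (s : ℕ) (K : List (ℕ × ℕ)) (e : ℕ) : Option ℕ :=
  (List.range s).find? (goodb s K e)

def freeB (K : List (ℕ × ℕ)) (e : ℕ) : Bool := !(K.any fun p => p.1 == e)

def attn (s : ℕ) (K : List (ℕ × ℕ)) (e : ℕ) : Bool := freeB K e && (wit s K e).isSome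

def cand (s : ℕ) (K : List (ℕ × ℕ)) : Option ℕ := (List.range (s+1)).find? (attn s K)

def act (s : ℕ) (K : List (ℕ × ℕ)) : List (ℕ × ℕ) :=
  match cand s K with
  | none => K
  | some e => (K.filter fun p => decide (p.1 < e)) ++ [(e, (wit s K e).iget)]

def St : ℕ → List (ℕ × ℕ) := fun s => Nat.rec [] (fun t K => act t K) s

lemma St_succ (s : ℕ) : St (s+1) = act s (St s) := rfl

def ActAt (s e : ℕ) : Prop := cand s (St s) = some e

/-! ### find? on ranges -/

lemma find?_range_spec {p : ℕ → Bool} {n x : ℕ} (h : (List.range n).find? p = some x) :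
    p x = true ∧ ∀ y < x, p y = false := by
  induction n with
  | zero => simp at h
  | succ n ih =>
    rw [List.range_succ, List.find?_append] at h
    cases hf : (List.range n).find? p with
    | some x' =>
      rw [hf] at h
      simp [Option.or] at h
      subst h
      exact ih hf
    | none =>
      rw [hf] at h
      simp only [Option.or, List.find?] at h
      have hnone := List.find?_eq_none.1 hf
      by_cases hpn : p n = true
      · rw [hpn] at h
        simp at h
        subst h
        refine ⟨hpn, fun y hy => ?_⟩
        have := hnone y (List.mem_range.2 hy)
        simpa using this
      · rw [Bool.not_eq_true] at hpn
        rw [hpn] at h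
        simp at h

lemma find?_range_le {p : ℕ → Bool} {n x : ℕ} (hx : x < n) (hp : p x = true) :
    ∃ y, (List.range n).find? p = some y ∧ y ≤ x := by
  cases hf : (List.range n).find? p with
  | none =>
    have := List.find?_eq_none.1 hf x (List.mem_range.2 hx)
    simp [hp] at this
  | some y =>
    refine ⟨y, rfl, ?_⟩
    by_contra hc
    push_neg at hc
    have := (find?_range_spec hf).2 x hc
    rw [hp] at this; simp at this

/-! ### basic act/St lemmas -/

lemma freeB_iff {K : List (ℕ × ℕ)} {e : ℕ} : freeB K e = true ↔ ∀ p ∈ K, p.1 ≠ e := by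
  simp [freeB]

lemma actAt_free {s e : ℕ} (h : ActAt s e) :
    freeB (St s) e = true ∧ (wit s (St s) e).isSome = true := by
  have := List.find?_some h
  simpa [attn] using this

lemma actAt_wit {s e : ℕ} (h : ActAt s e) :
    ∃ b, wit s (St s) e = some b := by
  rcases Option.isSome_iff_exists.1 (actAt_free h).2 with ⟨b, hb⟩
  exact ⟨b, hb⟩

lemma actAt_mem {s e : ℕ} (h : ActAt s e) :
    (e, (wit s (St s) e).iget) ∈ St (s+1) := by
  rw [St_succ]
  unfold act
  rw [h]
  exact List.mem_append_right _ (List.mem_singleton.2 rfl)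

lemma mem_St_succ_cases {s : ℕ} {p : ℕ × ℕ} (h : p ∈ St (s+1)) :
    p ∈ St s ∨ (ActAt s p.1 ∧ p.2 = (wit s (St s) p.1).iget) := by
  rw [St_succ] at h
  unfold act at h
  cases hc : cand s (St s) with
  | none => rw [hc] at h; exact Or.inl h
  | some e =>
    rw [hc] at h
    rcases List.mem_append.1 h with h' | h'
    · exact Or.inl (List.mem_filter.1 h').1
    · rcases List.mem_singleton.1 h' with rfl
      exact Or.inr ⟨hc, rfl⟩

lemma mem_St_succ_of_keep {s : ℕ} {p : ℕ × ℕ} (hp : p ∈ St s)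
    (h : ∀ g ≤ p.1, ¬ ActAt s g) : p ∈ St (s+1) := by
  rw [St_succ]
  unfold act
  cases hc : cand s (St s) with
  | none => exact hp
  | some e =>
    have he : p.1 < e := by
      by_contra hcon
      exact h e (by omega) hc
    exact List.mem_append_left _ (List.mem_filter.2 ⟨hp, by simpa using he⟩)

lemma not_actAt_self {s : ℕ} {p : ℕ × ℕ} (hp : p ∈ St s) : ¬ ActAt s p.1 := by
  intro h
  have := (actAt_free h).1
  exact (freeB_iff.1 this p hp) rfl

lemma persist {f b : ℕ} {s u : ℕ} (hsu : s ≤ u) (hp : (f, b) ∈ St s)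
    (hno : ∀ v, s ≤ v → v < u → ∀ g < f, ¬ ActAt v g) : (f, b) ∈ St u := by
  induction u, hsu using Nat.le_induction with
  | base => exact hp
  | succ u hsu ih =>
    have hmem : (f, b) ∈ St u := ih (fun v hv hv' => hno v hv (by omega))
    refine mem_St_succ_of_keep hmem (fun g hg hact => ?_)
    rcases Nat.lt_or_ge g f with h' | h'
    · exact hno u hsu (by omega) g h' hact
    · have : g = f := by omega
      subst this
      exact not_actAt_self hmem hact

lemma no_claim_stable {e : ℕ} {s u : ℕ} (hsu : s ≤ u) (hp : ∀ b, (e, b) ∉ St s)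
    (hno : ∀ v, s ≤ v → v < u → ¬ ActAt v e) : ∀ b, (e, b) ∉ St u := by
  induction u, hsu using Nat.le_induction with
  | base => exact hp
  | succ u hsu ih =>
    intro b hb
    rcases mem_St_succ_cases hb with h | h
    · exact ih (fun v hv hv' => hno v hv (by omega)) b h
    · exact hno u hsu (by omega) h.1

/-! ### bound lemmas -/

lemma bound_filter {K : List (ℕ × ℕ)} {e f : ℕ} (hfe : f ≤ e) :
    bound (K.filter fun p => decide (p.1 < e)) f = bound K f := by
  induction K with
  | nil => rfl
  | cons q K ih =>
    by_cases hq : q.1 < e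
    · rw [List.filter_cons_of_pos (by simpa using hq)]
      unfold bound
      simp only [List.foldr_cons]
      rw [show (List.foldr _ 0 (List.filter _ K)) = bound (K.filter fun p => decide (p.1 < e)) f from rfl,
        show (List.foldr _ 0 K) = bound K f from rfl, ih]
    · rw [List.filter_cons_of_neg (by simpa using hq)]
      unfold bound
      simp only [List.foldr_cons]
      have hqf : ¬ q.1 < f := by omega
      rw [if_neg hqf]
      exact ih

lemma bound_append_last {K : List (ℕ × ℕ)} {e b f : ℕ} (hfe : f ≤ e) :
    bound (K ++ [(e, b)]) f = bound K f := by
  unfold bound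
  rw [List.foldr_append]
  simp only [List.foldr_cons, List.foldr_nil]
  rw [if_neg (by omega : ¬ e < f)]

lemma bound_ge {K : List (ℕ × ℕ)} {p : ℕ × ℕ} {e : ℕ} (hp : p ∈ K) (hpe : p.1 < e) :
    p.2 ≤ bound K e := by
  induction K with
  | nil => simp at hp
  | cons q K ih =>
    unfold bound
    simp only [List.foldr_cons]
    rcases List.mem_cons.1 hp with rfl | hmem
    · rw [if_pos hpe]
      exact le_max_left _ _
    · have h1 : p.2 ≤ bound K e := ih hmem
      by_cases hq : q.1 < e
      · rw [if_pos hq]; exact le_trans h1 (le_max_right _ _)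
      · rw [if_neg hq]; exact h1

lemma bound_act {s : ℕ} {e f : ℕ} {K : List (ℕ × ℕ)} (hc : cand s K = some e) (hfe : f ≤ e) :
    bound (act s K) f = bound K f := by
  unfold act
  rw [hc]
  simp only []
  rw [bound_append_last hfe, bound_filter hfe]


lemma St_sorted (s : ℕ) : (St s).Pairwise (fun p q => p.1 < q.1) := by
  induction s with
  | zero => exact List.Pairwise.nil
  | succ s ih =>
    rw [St_succ]
    unfold act
    cases hc : cand s (St s) with
    | none => exact ih
    | some e =>
      rw [List.pairwise_append]
      refine ⟨ih.sublist List.filter_sublist, List.pairwise_singleton _ _, ?_⟩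
      intro x hx y hy
      rcases List.mem_singleton.1 hy with rfl
      have := (List.mem_filter.1 hx).2
      simpa using this

lemma St_inv {s : ℕ} : ∀ p ∈ St s,
    p.2 ≠ 0 ∧ p.2 % 2^(bound (St s) p.1 + 1) = 0 ∧ ∃ t, enum p.1 t p.2 = true := by
  induction s with
  | zero => intro p hp; simp [St] at hp
  | succ s ih =>
    intro p hp
    rw [St_succ] at hp ⊢
    unfold act at hp ⊢
    cases hc : cand s (St s) with
    | none =>
      simp only [hc] at hp ⊢
      exact ih p hp
    | some e =>
      simp only [hc] at hp ⊢
      have hba : ∀ f, f ≤ e → bound ((St s).filter (fun p => decide (p.1 < e))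
          ++ [(e, (wit s (St s) e).iget)]) f = bound (St s) f := by
        intro f hf
        rw [bound_append_last hf, bound_filter hf]
      rcases List.mem_append.1 hp with h' | h'
      · have hmem := (List.mem_filter.1 h').1
        have hlt : p.1 < e := by simpa using (List.mem_filter.1 h').2
        have := ih p hmem
        rwa [hba p.1 (le_of_lt hlt)]
      · rcases List.mem_singleton.1 h' with rfl
        simp only
        rw [hba e le_rfl]
        rcases actAt_wit hc with ⟨b, hb⟩
        have hgood : goodb s (St s) e b = true := List.find?_some hb
        rw [hb]
        unfold goodb at hgood
        simp only [Bool.and_eq_true, beq_iff_eq, Bool.not_eq_true'] at hgood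
        refine ⟨by simpa using hgood.1.1, hgood.1.2, s, hgood.2⟩

lemma actAt_finite : ∀ e : ℕ, {s | ActAt s e}.Finite := by
  intro e
  induction e using Nat.strong_induction_on with
  | _ e ih =>
  have hU : (⋃ f ∈ Set.Iio e, {s | ActAt s f}).Finite :=
    Set.Finite.biUnion (Set.finite_Iio e) (fun f hf => ih f hf)
  obtain ⟨M, hM⟩ := hU.bddAbove
  by_contra hinf
  have hinf' : {s | ActAt s e}.Infinite := hinf
  obtain ⟨s₁, hs₁, hMs₁⟩ := hinf'.exists_gt M
  obtain ⟨s₂, hs₂, hs₁s₂⟩ := hinf'.exists_gt s₁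
  have hb₁ : (e, (wit s₁ (St s₁) e).iget) ∈ St (s₁+1) := actAt_mem hs₁
  have hmem : (e, (wit s₁ (St s₁) e).iget) ∈ St s₂ := by
    refine persist (by omega) hb₁ (fun v hv hv' g hg hact => ?_)
    have : v ∈ ⋃ f ∈ Set.Iio e, {s | ActAt s f} :=
      Set.mem_biUnion hg hact
    have := hM this
    omega
  exact not_actAt_self hmem hs₂

lemma acts_le_finite (e : ℕ) : {s | ∃ f ≤ e, ActAt s f}.Finite := by
  have : {s | ∃ f ≤ e, ActAt s f} = ⋃ f ∈ Set.Iic e, {s | ActAt s f} := by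
    ext s; simp [Set.mem_iUnion]
  rw [this]
  exact Set.Finite.biUnion (Set.finite_Iic e) (fun f _ => actAt_finite f)

lemma bound_stable {e : ℕ} {s u : ℕ} (hsu : s ≤ u)
    (hno : ∀ v, s ≤ v → v < u → ∀ g < e, ¬ ActAt v g) :
    bound (St u) e = bound (St s) e := by
  induction u, hsu using Nat.le_induction with
  | base => rfl
  | succ u hsu ih =>
    have ihe := ih (fun v hv hv' => hno v hv (by omega))
    rw [St_succ]
    cases hc : cand u (St u) with
    | none => unfold act; rw [hc]; exact ihe
    | some g =>
      have hge : e ≤ g := by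
        by_contra hcon
        exact hno u hsu (by omega) g (by omega) hc
      rw [bound_act hc hge]
      exact ihe

/-- The key progress lemma: if requirement `e` has an inexhaustible supply of
witnesses, then it eventually has a permanent claim. -/
lemma requirement_met {e : ℕ}
    (hsupply : ∀ r : ℕ, ∃ b : ℕ, b ≠ 0 ∧ b % 2^(r+1) = 0 ∧ ∃ t, ∀ s, t ≤ s → enum e s b = true) :
    ∃ s₀ b, (∀ u, s₀ ≤ u → (e, b) ∈ St u) := by
  obtain ⟨M, hM⟩ := (acts_le_finite e).bddAbove
  have hno : ∀ v, M + 1 ≤ v → ∀ g ≤ e, ¬ ActAt v g := by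
    intro v hv g hg hact
    have : v ∈ {s | ∃ f ≤ e, ActAt s f} := ⟨g, hg, hact⟩
    have := hM this
    omega
  by_cases hcl : ∃ b, (e, b) ∈ St (M+1)
  · obtain ⟨b, hb⟩ := hcl
    refine ⟨M+1, b, fun u hu => persist hu hb ?_⟩
    intro v hv hv' g hg
    exact hno v hv g (by omega)
  · push_neg at hcl
    obtain ⟨b, hb0, hbmod, t, ht⟩ := hsupply (bound (St (M+1)) e)
    set s := max (M+1) (max t (max (b+1) e)) with hs
    have hsM : M + 1 ≤ s := le_max_left _ _
    have hnoclaim : ∀ b', (e, b') ∉ St s :=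
      no_claim_stable hsM hcl (fun v hv hv' => hno v hv e le_rfl)
    have hbst : bound (St s) e = bound (St (M+1)) e :=
      bound_stable hsM (fun v hv hv' g hg => hno v hv g (by omega))
    have hgood : goodb s (St s) e b = true := by
      unfold goodb
      rw [hbst]
      have henum : enum e s b = true := ht s (by omega)
      simp [hb0, hbmod, henum]
    have hwit : (wit s (St s) e).isSome = true := by
      unfold wit
      rw [List.find?_isSome]
      exact ⟨b, List.mem_range.2 (by omega), hgood⟩
    have hfree : freeB (St s) e = true := by
      rw [freeB_iff]
      intro p hp hpe
      exact hnoclaim p.2 (by rw [← hpe]; exact hp)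
    have hattn : attn s (St s) e = true := by
      unfold attn; rw [hfree, hwit]; rfl
    obtain ⟨y, hy, hye⟩ := find?_range_le (p := attn s (St s)) (n := s+1)
      (by omega : e < s + 1) hattn
    exact absurd hy (hno s hsM y hye)


def Qb (a b : ℕ) : Bool := !(b == 0) && decide (b < a) && (a % 2^(b+1) == b)

def colStep (a : ℕ) (T : List Bool) : Bool :=
  match (St a).find? (fun p => Qb a p.2) with
  | some p => !(T.getD p.2 false)
  | none => false

def tab : ℕ → List Bool := fun a => Nat.rec [] (fun t T => T ++ [colStep t T]) a

def c' (a : ℕ) : Bool := colStep a (tab a)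


lemma tab_succ (a : ℕ) : tab (a+1) = tab a ++ [colStep a (tab a)] := rfl

lemma tab_length (a : ℕ) : (tab a).length = a := by
  induction a with
  | zero => rfl
  | succ a ih => rw [tab_succ]; simp [ih]

lemma tab_getD {b a : ℕ} (h : b < a) : (tab a).getD b false = c' b := by
  induction a with
  | zero => omega
  | succ a ih =>
    rw [tab_succ]
    rcases Nat.lt_or_ge b a with h' | h'
    · rw [List.getD_append _ _ _ _ (by rw [tab_length]; exact h')]
      exact ih h'
    · have hb : b = a := by omega
      subst hb
      have : (tab b).length = b := tab_length b
      rw [List.getD_eq_getElem?_getD, List.getElem?_append_right (by omega)]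
      simp [this, c']

lemma Qb_lt {a b : ℕ} (h : Qb a b = true) : b < a := by
  simp [Qb] at h; exact h.1.2

lemma c'_rec (a : ℕ) :
    c' a = match (St a).find? (fun p => Qb a p.2) with
           | some p => !(c' p.2)
           | none => false := by
  unfold c' colStep
  cases hf : (St a).find? (fun p => Qb a p.2) with
  | none => rfl
  | some p =>
    have hq : Qb a p.2 = true := by
      have := List.find?_some hf; simpa using this
    simp only [tab_getD (Qb_lt hq)]
    rfl


section PrimrecHelpers

variable {α β : Type*} [Primcodable α] [Primcodable β]

theorem nat_pow : Primrec₂ ((· ^ ·) : ℕ → ℕ → ℕ) :=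
  Primrec₂.unpaired'.1 Nat.Primrec.pow

theorem primrec_find? {f : α → List β} {p : α → β → Bool}
    (hf : Primrec f) (hp : Primrec₂ p) : Primrec fun a => (f a).find? (p a) := by
  have heq : ∀ a, (f a).find? (p a)
      = (f a).foldr (fun b o => bif p a b then some b else o) none := by
    intro a
    induction (f a) with
    | nil => rfl
    | cons b l ih =>
      rw [List.foldr_cons, ← ih, List.find?]
      cases hpb : p a b <;> simp [hpb]
  have : Primrec fun a => (f a).foldr
      (fun b o => (fun (q : β × Option β) => bif p a q.1 then some q.1 else q.2) (b, o)) none :=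
    Primrec.list_foldr hf (Primrec.const none)
      (Primrec.cond (hp.comp Primrec.fst (Primrec.fst.comp Primrec.snd))
        (Primrec.option_some.comp (Primrec.fst.comp Primrec.snd))
        (Primrec.snd.comp Primrec.snd)).to₂
  exact this.of_eq (fun a => (heq a).symm)

theorem primrec_filter {f : α → List β} {p : α → β → Bool}
    (hf : Primrec f) (hp : Primrec₂ p) : Primrec fun a => (f a).filter (p a) := by
  have heq : ∀ a, (f a).filter (p a)
      = (f a).foldr (fun b r => bif p a b then b :: r else r) [] := by
    intro a
    induction (f a) with
    | nil => rfl
    | cons b l ih =>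
      rw [List.foldr_cons, ← ih, List.filter]
      cases hpb : p a b <;> simp [hpb]
  have : Primrec fun a => (f a).foldr
      (fun b r => (fun (q : β × List β) => bif p a q.1 then q.1 :: q.2 else q.2) (b, r)) [] :=
    Primrec.list_foldr hf (Primrec.const [])
      (Primrec.cond (hp.comp Primrec.fst (Primrec.fst.comp Primrec.snd))
        (Primrec.list_cons.comp (Primrec.fst.comp Primrec.snd) (Primrec.snd.comp Primrec.snd))
        (Primrec.snd.comp Primrec.snd)).to₂
  exact this.of_eq (fun a => (heq a).symm)

theorem primrec_any {f : α → List β} {p : α → β → Bool}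
    (hf : Primrec f) (hp : Primrec₂ p) : Primrec fun a => (f a).any (p a) := by
  have heq : ∀ a, (f a).any (p a) = (f a).foldr (fun b r => p a b || r) false := by
    intro a
    induction (f a) with
    | nil => rfl
    | cons b l ih => rw [List.foldr_cons, ← ih, List.any_cons]
  have : Primrec fun a => (f a).foldr
      (fun b r => (fun (q : β × Bool) => p a q.1 || q.2) (b, r)) false :=
    Primrec.list_foldr hf (Primrec.const false)
      ((Primrec.dom_bool₂ (· || ·)).comp
        (hp.comp Primrec.fst (Primrec.fst.comp Primrec.snd))
        (Primrec.snd.comp Primrec.snd)).to₂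
  exact this.of_eq (fun a => (heq a).symm)

theorem primrec_bnot : Primrec Bool.not := Primrec.dom_bool _

theorem primrec_listsum : Primrec (List.sum : List ℕ → ℕ) := by
  have : Primrec fun (l : List ℕ) => l.foldr (fun b r => (fun q : ℕ × ℕ => q.1 + q.2) (b, r)) 0 :=
    Primrec.list_foldr Primrec.id (Primrec.const 0)
      (Primrec.nat_add.comp (Primrec.fst.comp Primrec.snd) (Primrec.snd.comp Primrec.snd)).to₂
  exact this.of_eq (fun l => by induction l with
    | nil => rfl
    | cons b l ih => rw [List.foldr_cons, ih, List.sum_cons])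

end PrimrecHelpers

section MachinePrimrec
open Nat.Partrec.Code

theorem beq_eq_decide (a b : ℕ) : (a == b) = decide (a = b) := by
  by_cases h : a = b <;> simp [h]

theorem enum_prim : Primrec fun t : (ℕ × ℕ) × ℕ => enum t.1.1 t.1.2 t.2 := by
  have h : Primrec fun t : (ℕ × ℕ) × ℕ =>
      evaln t.1.2 (Denumerable.ofNat Nat.Partrec.Code t.1.1) t.2 :=
    primrec_evaln.comp (((Primrec.snd.comp Primrec.fst).pair
      ((Primrec.ofNat Nat.Partrec.Code).comp (Primrec.fst.comp Primrec.fst))).pair Primrec.snd)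
  exact Primrec.option_isSome.comp h

theorem bound_prim : Primrec₂ bound := by
  have : Primrec fun a : List (ℕ × ℕ) × ℕ => a.1.foldr
      (fun p r => (fun q : (ℕ × ℕ) × ℕ => if q.1.1 < a.2 then max q.1.2 q.2 else q.2) (p, r)) 0 :=
    Primrec.list_foldr Primrec.fst (Primrec.const 0)
      (Primrec.ite
        (Primrec.nat_lt.comp (Primrec.fst.comp (Primrec.fst.comp Primrec.snd))
          (Primrec.snd.comp Primrec.fst))
        (Primrec.nat_max.comp (Primrec.snd.comp (Primrec.fst.comp Primrec.snd))
          (Primrec.snd.comp Primrec.snd))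
        (Primrec.snd.comp Primrec.snd)).to₂
  exact this.to₂.of_eq (fun K e => rfl)

theorem goodb_prim : Primrec₂ fun (t : (ℕ × List (ℕ × ℕ)) × ℕ) (b : ℕ) =>
    goodb t.1.1 t.1.2 t.2 b := by
  unfold goodb
  have hb0 : Primrec₂ fun (t : (ℕ × List (ℕ × ℕ)) × ℕ) (b : ℕ) => !(b == 0) :=
    (primrec_bnot.comp ((Primrec.eq (α := ℕ)).comp Primrec.snd (Primrec.const 0)).decide).to₂.of_eq
      (fun _ b => by rw [beq_eq_decide])
  have hmod : Primrec₂ fun (t : (ℕ × List (ℕ × ℕ)) × ℕ) (b : ℕ) =>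
      (b % 2^(bound t.1.2 t.2 + 1) == 0) := by
    have hbnd : Primrec fun q : ((ℕ × List (ℕ × ℕ)) × ℕ) × ℕ => bound q.1.1.2 q.1.2 :=
      bound_prim.comp (Primrec.snd.comp (Primrec.fst.comp Primrec.fst))
        (Primrec.snd.comp Primrec.fst)
    have hp : Primrec fun q : ((ℕ × List (ℕ × ℕ)) × ℕ) × ℕ =>
        q.2 % 2^(bound q.1.1.2 q.1.2 + 1) :=
      Primrec.nat_mod.comp Primrec.snd
        (nat_pow.comp (Primrec.const 2) (Primrec.succ.comp hbnd))
    exact ((Primrec.eq (α := ℕ)).comp hp (Primrec.const 0)).decide.to₂.of_eq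
      (fun q b => by rw [beq_eq_decide])
  have henum : Primrec₂ fun (t : (ℕ × List (ℕ × ℕ)) × ℕ) (b : ℕ) => enum t.2 t.1.1 b :=
    (enum_prim.comp (((Primrec.snd.comp Primrec.fst).pair
      (Primrec.fst.comp (Primrec.fst.comp Primrec.fst))).pair Primrec.snd)).to₂
  exact ((Primrec.dom_bool₂ (· && ·)).comp
    ((Primrec.dom_bool₂ (· && ·)).comp hb0 hmod) henum).to₂

theorem wit_prim : Primrec fun t : (ℕ × List (ℕ × ℕ)) × ℕ => wit t.1.1 t.1.2 t.2 :=
  primrec_find? (Primrec.list_range.comp (Primrec.fst.comp Primrec.fst)) goodb_prim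

theorem freeB_prim : Primrec₂ freeB := by
  have : Primrec fun a : List (ℕ × ℕ) × ℕ => (a.1.any fun p => p.1 == a.2) := by
    refine primrec_any Primrec.fst ?_
    exact ((Primrec.eq (α := ℕ)).comp (Primrec.fst.comp Primrec.snd)
      (Primrec.snd.comp Primrec.fst)).decide.to₂.of_eq (fun a p => by rw [beq_eq_decide])
  exact (primrec_bnot.comp this).to₂

theorem attn_prim : Primrec fun t : (ℕ × List (ℕ × ℕ)) × ℕ => attn t.1.1 t.1.2 t.2 := by
  unfold attn
  exact (Primrec.dom_bool₂ (· && ·)).comp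
    (freeB_prim.comp (Primrec.snd.comp Primrec.fst) Primrec.snd)
    (Primrec.option_isSome.comp wit_prim)

theorem cand_prim : Primrec₂ cand := by
  refine primrec_find? (f := fun a : ℕ × List (ℕ × ℕ) => List.range (a.1 + 1))
    (p := fun a e => attn a.1 a.2 e) ?_ ?_
  · exact Primrec.list_range.comp (Primrec.succ.comp Primrec.fst)
  · exact attn_prim.to₂

theorem act_prim : Primrec₂ act := by
  have hfil : Primrec fun q : (ℕ × List (ℕ × ℕ)) × ℕ =>
      q.1.2.filter fun p => decide (p.1 < q.2) :=
    primrec_filter (Primrec.snd.comp Primrec.fst)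
      (Primrec.nat_lt.comp (Primrec.fst.comp Primrec.snd) (Primrec.snd.comp Primrec.fst)).decide.to₂
  have hsing : Primrec fun q : (ℕ × List (ℕ × ℕ)) × ℕ =>
      [(q.2, (wit q.1.1 q.1.2 q.2).iget)] :=
    Primrec.list_cons.comp (Primrec.snd.pair (Primrec.option_iget.comp wit_prim))
      (Primrec.const [])
  have hbody : Primrec₂ fun (a : ℕ × List (ℕ × ℕ)) (e : ℕ) =>
      (a.2.filter fun p => decide (p.1 < e)) ++ [(e, (wit a.1 a.2 e).iget)] :=
    (Primrec.list_append.comp hfil hsing).to₂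
  exact ((Primrec.option_casesOn (cand_prim.comp Primrec.fst Primrec.snd)
      Primrec.snd hbody).to₂.of_eq (fun s K => by
    unfold act
    cases cand s K <;> rfl))

end MachinePrimrec

section ColoringPrimrec

theorem St_prim : Primrec St :=
  (Primrec.nat_rec₁ [] act_prim).of_eq (fun _ => rfl)

theorem Qb_prim : Primrec₂ Qb := by
  unfold Qb
  have hb0 : Primrec₂ fun (a b : ℕ) => !(b == 0) :=
    (primrec_bnot.comp ((Primrec.eq (α := ℕ)).comp Primrec.snd (Primrec.const 0)).decide).to₂.of_eq
      (fun _ b => by rw [beq_eq_decide])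
  have hlt : Primrec₂ fun (a b : ℕ) => decide (b < a) :=
    (Primrec.nat_lt.comp Primrec.snd Primrec.fst).decide.to₂
  have hmod : Primrec₂ fun (a b : ℕ) => (a % 2^(b+1) == b) :=
    ((Primrec.eq (α := ℕ)).comp
      (Primrec.nat_mod.comp Primrec.fst
        (nat_pow.comp (Primrec.const 2) (Primrec.succ.comp Primrec.snd)))
      Primrec.snd).decide.to₂.of_eq (fun a b => by rw [beq_eq_decide])
  exact ((Primrec.dom_bool₂ (· && ·)).comp
    ((Primrec.dom_bool₂ (· && ·)).comp hb0 hlt) hmod).to₂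

theorem colStep_prim : Primrec₂ colStep := by
  have hfind : Primrec fun q : ℕ × List Bool => (St q.1).find? (fun p => Qb q.1 p.2) :=
    primrec_find? (St_prim.comp Primrec.fst)
      ((Qb_prim.comp (Primrec.fst.comp Primrec.fst) (Primrec.snd.comp Primrec.snd)).to₂)
  have hg : Primrec₂ fun (q : ℕ × List Bool) (p : ℕ × ℕ) => !(q.2.getD p.2 false) :=
    (primrec_bnot.comp ((Primrec.list_getD false).comp (Primrec.snd.comp Primrec.fst)
      (Primrec.snd.comp Primrec.snd))).to₂
  exact ((Primrec.option_casesOn hfind (Primrec.const false) hg).to₂.of_eq (fun a T => by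
    unfold colStep
    cases (St a).find? (fun p => Qb a p.2) <;> rfl))

theorem getD_map_range {f : ℕ → Bool} {n b : ℕ} (h : b < n) :
    (((List.range n).map f).getD b false) = f b := by
  rw [List.getD_eq_getElem?_getD]
  simp [List.getElem?_map, List.getElem?_range h]

theorem colStep_ext {a : ℕ} {T₁ T₂ : List Bool}
    (h : ∀ b < a, T₁.getD b false = T₂.getD b false) : colStep a T₁ = colStep a T₂ := by
  unfold colStep
  cases hf : (St a).find? (fun p => Qb a p.2) with
  | none => rfl
  | some p =>
    have hq : Qb a p.2 = true := by simpa using List.find?_some hf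
    have := h p.2 (Qb_lt hq)
    simp only [this]

theorem c'_prim : Primrec c' := by
  have hg : Primrec₂ fun (_ : ℕ) (L : List Bool) => (some (colStep L.length L) : Option Bool) :=
    (Primrec.option_some.comp
      (colStep_prim.comp (Primrec.list_length.comp Primrec.snd) Primrec.snd)).to₂
  have H := Primrec.nat_strong_rec (fun (_ : ℕ) (n : ℕ) => c' n) hg (fun _ n => by
    simp only [Option.some.injEq]
    have hlen : ((List.range n).map c').length = n := by simp
    rw [hlen]
    have : colStep n ((List.range n).map c') = colStep n (tab n) := by
      refine colStep_ext (fun b hb => ?_)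
      rw [getD_map_range hb, tab_getD hb]
    rw [this]
    rfl)
  exact H.comp (Primrec.const 0) Primrec.id

theorem raise'_foldl (l : List ℕ) (L0 : List ℕ) (n : ℕ) :
    (l.foldl (fun acc m => (acc.1 ++ [m + acc.2], m + acc.2 + 1)) (L0, n)).1
      = L0 ++ Denumerable.raise' l n := by
  induction l generalizing L0 n with
  | nil => simp [Denumerable.raise']
  | cons m l ih =>
    rw [List.foldl_cons]
    rw [ih]
    simp [Denumerable.raise']

theorem lower'_foldl (l : List ℕ) (L0 : List ℕ) (n : ℕ) :
    (l.foldl (fun acc m => (acc.1 ++ [m - acc.2], m + 1)) (L0, n)).1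
      = L0 ++ Denumerable.lower' l n := by
  induction l generalizing L0 n with
  | nil => simp [Denumerable.lower']
  | cons m l ih =>
    rw [List.foldl_cons]
    rw [ih]
    simp [Denumerable.lower']

theorem raise'_prim : Primrec₂ Denumerable.raise' := by
  have hstep : Primrec₂ fun (_ : List ℕ × ℕ) (q : (List ℕ × ℕ) × ℕ) =>
      (q.1.1 ++ [q.2 + q.1.2], q.2 + q.1.2 + 1) := by
    have hval : Primrec fun x : (List ℕ × ℕ) × ((List ℕ × ℕ) × ℕ) => x.2.2 + x.2.1.2 :=
      Primrec.nat_add.comp (Primrec.snd.comp Primrec.snd)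
        (Primrec.snd.comp (Primrec.fst.comp Primrec.snd))
    exact ((Primrec.list_append.comp (Primrec.fst.comp (Primrec.fst.comp Primrec.snd))
        (Primrec.list_cons.comp hval (Primrec.const []))).pair (Primrec.succ.comp hval)).to₂
  have hfold : Primrec fun a : List ℕ × ℕ =>
      (a.1.foldl (fun acc m => (acc.1 ++ [m + acc.2], m + acc.2 + 1)) (([] : List ℕ), a.2)) :=
    Primrec.list_foldl Primrec.fst ((Primrec.const []).pair Primrec.snd) hstep
  exact ((Primrec.fst.comp hfold).to₂.of_eq (fun l n => by
    rw [raise'_foldl l [] n]; simp))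

theorem lower'_prim : Primrec₂ Denumerable.lower' := by
  have hstep : Primrec₂ fun (_ : List ℕ × ℕ) (q : (List ℕ × ℕ) × ℕ) =>
      (q.1.1 ++ [q.2 - q.1.2], q.2 + 1) := by
    exact ((Primrec.list_append.comp (Primrec.fst.comp (Primrec.fst.comp Primrec.snd))
        (Primrec.list_cons.comp
          (Primrec.nat_sub.comp (Primrec.snd.comp Primrec.snd)
            (Primrec.snd.comp (Primrec.fst.comp Primrec.snd)))
          (Primrec.const []))).pair
        (Primrec.succ.comp (Primrec.snd.comp Primrec.snd))).to₂
  have hfold : Primrec fun a : List ℕ × ℕ =>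
      (a.1.foldl (fun acc m => (acc.1 ++ [m - acc.2], m + 1)) (([] : List ℕ), a.2)) :=
    Primrec.list_foldl Primrec.fst ((Primrec.const []).pair Primrec.snd) hstep
  exact ((Primrec.fst.comp hfold).to₂.of_eq (fun l n => by
    rw [lower'_foldl l [] n]; simp))

/-- encode with the `Primcodable` instance (the one `Computable` refers to) -/
def encF (B : Finset ℕ) : ℕ := @Encodable.encode (Finset ℕ) Primcodable.toEncodable B

theorem map_eqv_refl (B : Finset ℕ) : B.map (Denumerable.eqv ℕ).toEmbedding = B := by
  ext a
  simp [Finset.mem_map, Denumerable.eqv, Encodable.encode_nat]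

theorem encode_finset_eq (B : Finset ℕ) :
    encF B = Encodable.encode (Denumerable.lower' (B.sort (· ≤ ·)) 0) := by
  have h : encF B
      = Encodable.encode (Denumerable.lower'
          ((B.map (Denumerable.eqv ℕ).toEmbedding).sort (· ≤ ·)) 0) := rfl
  rw [h, map_eqv_refl]

theorem toL_eq (B : Finset ℕ) :
    Denumerable.raise' (Denumerable.ofNat (List ℕ) (encF B)) 0
      = B.sort (· ≤ ·) := by
  rw [encode_finset_eq, Denumerable.ofNat_encode]
  exact Denumerable.raise_lower' (fun m _ => Nat.zero_le m) (Finset.sortedLT_sort B)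

theorem bc_sort (B : Finset ℕ) : bc B = ((B.sort (· ≤ ·)).map (fun i => 2^i)).sum := by
  unfold bc
  rw [Finset.sum_eq_multiset_sum, ← Finset.sort_eq (s := B) (r := (· ≤ ·)), Multiset.map_coe,
    Multiset.sum_coe]

theorem bc_prim : Primrec bc := by
  have h1 : Primrec fun B : Finset ℕ =>
      Denumerable.raise' (Denumerable.ofNat (List ℕ) (encF B)) 0 :=
    raise'_prim.comp ((Primrec.ofNat (List ℕ)).comp Primrec.encode) (Primrec.const 0)
  have h2 : Primrec fun B : Finset ℕ =>
      ((Denumerable.raise' (Denumerable.ofNat (List ℕ) (encF B)) 0).map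
        (fun i => 2^i)).sum :=
    primrec_listsum.comp (Primrec.list_map h1 ((nat_pow.comp (Primrec.const 2) Primrec.snd).to₂))
  exact h2.of_eq (fun B => by rw [toL_eq, ← bc_sort])

theorem bitIndices_prim : Primrec Nat.bitIndices := by
  have hg : Primrec₂ fun (_ : ℕ) (L : List (List ℕ)) =>
      (some (if L.length = 0 then ([] : List ℕ)
        else if L.length % 2 = 1 then 0 :: (L.getD (L.length/2) []).map (· + 1)
        else (L.getD (L.length/2) []).map (· + 1)) : Option (List ℕ)) := by
    have hlen : Primrec fun q : ℕ × List (List ℕ) => q.2.length :=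
      Primrec.list_length.comp Primrec.snd
    have hget : Primrec fun q : ℕ × List (List ℕ) => q.2.getD (q.2.length/2) [] :=
      (Primrec.list_getD []).comp Primrec.snd
        (Primrec.nat_div.comp hlen (Primrec.const 2))
    have hmap : Primrec fun q : ℕ × List (List ℕ) =>
        (q.2.getD (q.2.length/2) []).map (· + 1) :=
      Primrec.list_map hget (Primrec.succ.comp Primrec.snd).to₂
    have hcons : Primrec fun q : ℕ × List (List ℕ) =>
        0 :: (q.2.getD (q.2.length/2) []).map (· + 1) :=
      Primrec.list_cons.comp (Primrec.const 0) hmap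
    have hbody : Primrec fun q : ℕ × List (List ℕ) =>
        (if q.2.length = 0 then ([] : List ℕ)
          else if q.2.length % 2 = 1 then 0 :: (q.2.getD (q.2.length/2) []).map (· + 1)
          else (q.2.getD (q.2.length/2) []).map (· + 1)) := by
      refine Primrec.ite ((Primrec.eq (α := ℕ)).comp hlen (Primrec.const 0))
        (Primrec.const []) ?_
      exact Primrec.ite ((Primrec.eq (α := ℕ)).comp
        (Primrec.nat_mod.comp hlen (Primrec.const 2)) (Primrec.const 1)) hcons hmap
    exact (Primrec.option_some.comp hbody).to₂
  have H := Primrec.nat_strong_rec (fun (_ : ℕ) (n : ℕ) => Nat.bitIndices n) hg (fun _ n => by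
    simp only [Option.some.injEq, List.length_map, List.length_range]
    match n with
    | 0 => simp
    | Nat.succ m =>
      have hlt : (m+1)/2 < m+1 := Nat.div_lt_self (by omega) (by omega)
      have hget : ((List.range (m+1)).map Nat.bitIndices).getD ((m+1)/2) []
          = Nat.bitIndices ((m+1)/2) := by
        rw [List.getD_eq_getElem?_getD]
        simp [List.getElem?_map, List.getElem?_range hlt]
      rw [if_neg (by omega)]
      rw [hget]
      rcases Nat.even_or_odd (m+1) with he | ho
      · obtain ⟨k, hk⟩ := he
        rw [if_neg (by omega)]
        rw [show (m+1)/2 = k from by omega, show m.succ = 2 * k from by omega,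
          Nat.bitIndices_two_mul]
      · obtain ⟨k, hk⟩ := ho
        rw [if_pos (by omega)]
        rw [show (m+1)/2 = k from by omega, show m.succ = 2 * k + 1 from by omega,
          Nat.bitIndices_two_mul_add_one])
  exact H.comp (Primrec.const 0) Primrec.id

theorem sort_toFinset_of_sorted {L : List ℕ} (h : L.Pairwise (· < ·)) :
    L.toFinset.sort (· ≤ ·) = L :=
  (List.toFinset_sort (· ≤ ·) h.nodup).2 (h.imp le_of_lt)

theorem encode_fb (n : ℕ) :
    encF (fb n) = Encodable.encode (Denumerable.lower' n.bitIndices 0) := by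
  rw [encode_finset_eq (fb n)]
  unfold fb
  rw [sort_toFinset_of_sorted Nat.bitIndices_sorted.pairwise]

theorem fb_prim : Primrec fb := by
  have h : Primrec fun n : ℕ => Encodable.encode (Denumerable.lower' n.bitIndices 0) :=
    Primrec.encode.comp (lower'_prim.comp bitIndices_prim (Primrec.const 0))
  have h2 : Primrec fun n : ℕ => encF (fb n) := h.of_eq fun n => (encode_fb n).symm
  have h3 : Primrec fun n : ℕ => @Encodable.encode (Finset ℕ) Primcodable.toEncodable (fb n) := h2
  exact Primrec.encode_iff.1 h3

/-- THE coloring -/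
def coloring (A : Finset ℕ) : Bool := c' (bc A)

theorem coloring_computable : Computable coloring :=
  (c'_prim.comp bc_prim).to_comp

end ColoringPrimrec

section Reduction
open Nat.Partrec.Code

theorem enum_mono {e s s' b : ℕ} (h : s ≤ s') (he : enum e s b = true) : enum e s' b = true := by
  unfold enum at he ⊢
  obtain ⟨y, hy⟩ := Option.isSome_iff_exists.1 he
  exact Option.isSome_iff_exists.2 ⟨y, evaln_mono h hy⟩

theorem reduction {R : ℕ → Finset ℕ → Bool} (hR : Computable₂ R) :
    ∃ e : ℕ, ∀ B : Finset ℕ, (∃ x, R x B = true) ↔ ∃ s, enum e s (bc B) = true := by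
  have hh : Computable fun p : ℕ × ℕ => R p.2 (fb p.1) :=
    hR.comp Computable.snd (fb_prim.to_comp.comp Computable.fst)
  have hq : Partrec₂ fun (n x : ℕ) => (Part.some (R x (fb n)) : Part Bool) :=
    Computable₂.partrec₂ hh.to₂
  have hpf : _root_.Partrec fun n : ℕ => Nat.rfind (fun x => (Part.some (R x (fb n)) : Part Bool)) :=
    Partrec.rfind hq
  have hnat : Nat.Partrec fun n : ℕ =>
      Nat.rfind (fun x => (Part.some (R x (fb n)) : Part Bool)) :=
    Partrec.nat_iff.1 hpf
  obtain ⟨cd, hcd⟩ := exists_code.1 hnat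
  refine ⟨Encodable.encode cd, fun B => ⟨?_, ?_⟩⟩
  · rintro ⟨x, hx⟩
    have hdom : (Nat.rfind fun k => (Part.some (R k (fb (bc B))) : Part Bool)).Dom := by
      apply Nat.rfind_dom.2
      refine ⟨x, by simp [fb_bc, hx], fun {m} _ => trivial⟩
    have hdom' : (eval cd (bc B)).Dom := by rw [hcd]; exact hdom
    obtain ⟨y, hy⟩ := Part.dom_iff_mem.1 hdom'
    obtain ⟨k, hk⟩ := evaln_complete.1 hy
    refine ⟨k, ?_⟩
    unfold enum
    rw [Denumerable.ofNat_encode]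
    exact Option.isSome_iff_exists.2 ⟨y, hk⟩
  · rintro ⟨s, hs⟩
    unfold enum at hs
    rw [Denumerable.ofNat_encode] at hs
    obtain ⟨y, hy⟩ := Option.isSome_iff_exists.1 hs
    have hmem : y ∈ eval cd (bc B) := evaln_sound hy
    rw [hcd] at hmem
    have hdom : (Nat.rfind fun k => (Part.some (R k (fb (bc B))) : Part Bool)).Dom :=
      Part.dom_iff_mem.2 ⟨y, hmem⟩
    replace hdom := Nat.rfind_dom.1 hdom
    obtain ⟨n, hn, -⟩ := hdom
    rw [Part.mem_some_iff] at hn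
    exact ⟨n, by rw [← fb_bc B]; exact hn.symm⟩

end Reduction

section Fresh

theorem fresh {𝒟 : Set (Finset ℕ)} (hinf : 𝒟.Infinite) (hdisj : 𝒟.Pairwise Disjoint)
    (r : ℕ) : ∃ B ∈ 𝒟, B.Nonempty ∧ ∀ i ∈ B, r < i := by
  classical
  set bad := {B ∈ 𝒟 | (B ∩ Finset.range (r+1)).Nonempty} with hbad
  have hfin : bad.Finite := by
    have hinj : Set.InjOn (fun B => B ∩ Finset.range (r+1)) bad := by
      intro B hB B' hB' heq
      by_contra hne
      have hd := hdisj hB.1 hB'.1 hne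
      obtain ⟨x, hx⟩ := hB.2
      have hx' : x ∈ B' ∩ Finset.range (r+1) := by
        have heq' : B ∩ Finset.range (r+1) = B' ∩ Finset.range (r+1) := heq
        rw [← heq']; exact hx
      exact (Finset.disjoint_left.1 hd (Finset.mem_inter.1 hx).1) (Finset.mem_inter.1 hx').1
    have himage : ((fun B => B ∩ Finset.range (r+1)) '' bad)
        ⊆ ↑(Finset.range (r+1)).powerset := by
      rintro S ⟨B, -, rfl⟩
      simp only [Finset.coe_powerset, Set.mem_preimage, Set.mem_powerset_iff,
        Finset.coe_subset]
      exact Finset.inter_subset_right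
    exact Set.Finite.of_finite_image
      (Set.Finite.subset (Finset.range (r+1)).powerset.finite_toSet himage) hinj
  have hinf' : (𝒟 \ (bad ∪ {∅})).Infinite :=
    hinf.diff (hfin.union (Set.finite_singleton ∅))
  obtain ⟨B, hB⟩ := hinf'.nonempty
  have hB𝒟 : B ∈ 𝒟 := hB.1
  have hBne : B ≠ ∅ := fun h => hB.2 (Or.inr h)
  have hBnb : B ∉ bad := fun h => hB.2 (Or.inl h)
  refine ⟨B, hB𝒟, Finset.nonempty_iff_ne_empty.2 hBne, fun i hi => ?_⟩
  by_contra hir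
  push_neg at hir
  exact hBnb ⟨hB𝒟, ⟨i, Finset.mem_inter.2 ⟨hi, Finset.mem_range.2 (by omega)⟩⟩⟩

end Fresh

section Flip

theorem color_flip {e be a : ℕ} (hmem : (e, be) ∈ St a) (hQ : Qb a be = true)
    (hfail : ∀ p ∈ St a, p.1 < e → Qb a p.2 = false) :
    c' a = !(c' be) := by
  obtain ⟨l₁, l₂, hl⟩ := List.append_of_mem hmem
  have hsort := St_sorted a
  rw [hl] at hsort
  rw [List.pairwise_append] at hsort
  have hl₁ : ∀ y ∈ l₁, y.1 < e :=
    fun y hy => hsort.2.2 y hy (e, be) List.mem_cons_self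
  have hnone : l₁.find? (fun p => Qb a p.2) = none := by
    rw [List.find?_eq_none]
    intro p hp
    have : Qb a p.2 = false := hfail p (by rw [hl]; exact List.mem_append_left _ hp) (hl₁ p hp)
    simp [this]
  have hfind : (St a).find? (fun p => Qb a p.2) = some (e, be) := by
    rw [hl, List.find?_append, hnone]
    simp [List.find?, hQ]
  rw [c'_rec a, hfind]

end Flip

end NCM

/-- There is a computable 2-coloring with no computably enumerable monochromatic
IP set. -/
theorem no_ce_monochromatic :
    ∃ c : Finset ℕ → Bool, Computable c ∧
      ∀ 𝒲 : Set (Finset ℕ), CEFam 𝒲 → GeneratesIP 𝒲 →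
        ¬ ∃ b : Bool, ∀ T ∈ NU 𝒲, c T = b := by
  classical
  refine ⟨NCM.coloring, NCM.coloring_computable, ?_⟩
  intro 𝒲 hCE hGen
  rintro ⟨bcol, hmono⟩
  obtain ⟨R, hR, h𝒲⟩ := hCE
  obtain ⟨e, he⟩ := NCM.reduction hR
  have memW : ∀ B : Finset ℕ, B ∈ 𝒲 ↔ ∃ s, NCM.enum e s (NCM.bc B) = true := by
    intro B
    rw [h𝒲]
    exact he B
  obtain ⟨𝒟, h𝒟sub, h𝒟inf, h𝒟disj⟩ := hGen
  have hsupply : ∀ r : ℕ, ∃ b : ℕ, b ≠ 0 ∧ b % 2^(r+1) = 0 ∧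
      ∃ t, ∀ s, t ≤ s → NCM.enum e s b = true := by
    intro r
    obtain ⟨B, hB𝒟, hBne, hBgt⟩ := NCM.fresh h𝒟inf h𝒟disj r
    refine ⟨NCM.bc B, NCM.bc_ne_zero hBne, ?_, ?_⟩
    · have hdvd : (2:ℕ)^(r+1) ∣ NCM.bc B :=
        NCM.bc_dvd (fun i hi => by have := hBgt i hi; omega)
      exact Nat.mod_eq_zero_of_dvd hdvd
    · have hBW : B ∈ 𝒲 := h𝒟sub hB𝒟
      obtain ⟨t, ht⟩ := (memW B).1 hBW
      exact ⟨t, fun s hs => NCM.enum_mono hs ht⟩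
  obtain ⟨s₀, be, hperm⟩ := NCM.requirement_met hsupply
  obtain ⟨D, hD𝒟, hDne, hDgt⟩ := NCM.fresh h𝒟inf h𝒟disj (max s₀ be)
  set Be : Finset ℕ := NCM.fb be with hBe
  have hmem₀ : (e, be) ∈ NCM.St s₀ := hperm s₀ le_rfl
  have hinv₀ := NCM.St_inv (e, be) hmem₀
  have hbene : be ≠ 0 := hinv₀.1
  have hBeW : Be ∈ 𝒲 := by
    rw [memW, hBe, NCM.bc_fb]
    exact hinv₀.2.2
  have hBeNe : Be.Nonempty := NCM.fb_nonempty hbene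
  have hmemBe : ∀ i ∈ Be, i < be := fun i hi => by
    have := NCM.mem_lt_bc hi
    rwa [hBe, NCM.bc_fb] at this
  have hdisjBD : Disjoint Be D := by
    rw [Finset.disjoint_left]
    intro i hiB hiD
    have h1 := hmemBe i hiB
    have h2 := hDgt i hiD
    omega
  set A : Finset ℕ := Be ∪ D with hA
  have hbcD0 : NCM.bc D ≠ 0 := NCM.bc_ne_zero hDne
  have hbcDgt : max s₀ be < NCM.bc D := by
    obtain ⟨i, hi⟩ := hDne
    have h1 := NCM.mem_lt_bc hi
    have h2 := hDgt i hi
    omega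
  have hbcA : NCM.bc A = be + NCM.bc D := by
    rw [hA, NCM.bc_union hdisjBD, hBe, NCM.bc_fb]
  have hs₀A : s₀ ≤ NCM.bc A := by omega
  have hmemA : (e, be) ∈ NCM.St (NCM.bc A) := hperm _ hs₀A
  have hinvA := NCM.St_inv (e, be) hmemA
  set r₀ := NCM.bound (NCM.St (NCM.bc A)) e with hr₀
  have hmodA : be % 2^(r₀+1) = 0 := hinvA.2.1
  have hdvdbe : (2:ℕ)^(r₀+1) ∣ be := Nat.dvd_of_mod_eq_zero hmodA
  have hr₀be : r₀ < be := by
    have h1 : 2^(r₀+1) ≤ be := Nat.le_of_dvd (Nat.pos_of_ne_zero hbene) hdvdbe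
    have h2 : r₀ < 2^(r₀+1) :=
      lt_of_lt_of_le (Nat.lt_two_pow_self) (Nat.pow_le_pow_right (by norm_num) (by omega))
    omega
  have hDbe : ∀ i ∈ D, be < i := fun i hi => by have := hDgt i hi; omega
  have hQ : NCM.Qb (NCM.bc A) be = true := by
    have hlt : be < NCM.bc A := by omega
    have hmod : NCM.bc A % 2^(be+1) = be := by
      obtain ⟨k, hk⟩ : (2:ℕ)^(be+1) ∣ NCM.bc D :=
        NCM.bc_dvd (fun i hi => by have := hDbe i hi; omega)
      rw [hbcA, hk, Nat.add_mul_mod_self_left]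
      exact Nat.mod_eq_of_lt
        (lt_of_lt_of_le (Nat.lt_two_pow_self) (Nat.pow_le_pow_right (by norm_num) (by omega)))
    simp [NCM.Qb, hbene, hlt, hmod]
  have hfail : ∀ p ∈ NCM.St (NCM.bc A), p.1 < e → NCM.Qb (NCM.bc A) p.2 = false := by
    intro p hp hpe
    have hinvp := NCM.St_inv p hp
    have hple : p.2 ≤ r₀ := NCM.bound_ge hp hpe
    have hdvd1 : (2:ℕ)^(p.2+1) ∣ be := dvd_trans (pow_dvd_pow 2 (by omega)) hdvdbe
    have hdvd2 : (2:ℕ)^(p.2+1) ∣ NCM.bc D :=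
      NCM.bc_dvd (fun i hi => by have := hDbe i hi; omega)
    have hmod0 : NCM.bc A % 2^(p.2+1) = 0 := by
      rw [hbcA]
      exact Nat.mod_eq_zero_of_dvd (dvd_add hdvd1 hdvd2)
    have hne : (NCM.bc A % 2^(p.2+1) == p.2) = false := by
      rw [hmod0]
      simp [Ne.symm hinvp.1]
    simp [NCM.Qb, hne]
  have hflip := NCM.color_flip hmemA hQ hfail
  have hBeNU : Be ∈ NU 𝒲 := by
    refine ⟨hBeNe, {Be}, ?_, ?_⟩
    · intro X hX
      simp only [Finset.coe_singleton, Set.mem_singleton_iff] at hX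
      rw [hX]; exact hBeW
    · simp
  have hDW : D ∈ 𝒲 := h𝒟sub hD𝒟
  have hANU : A ∈ NU 𝒲 := by
    refine ⟨hBeNe.mono Finset.subset_union_left, {Be, D}, ?_, ?_⟩
    · intro X hX
      simp only [Finset.coe_insert, Finset.coe_singleton, Set.mem_insert_iff,
        Set.mem_singleton_iff] at hX
      rcases hX with rfl | rfl
      · exact hBeW
      · exact hDW
    · rw [hA]
      rw [Finset.sup_insert, Finset.sup_singleton]
      rfl
  have h1 := hmono _ hBeNU
  have h2 := hmono _ hANU
  rw [show NCM.coloring Be = NCM.c' be from by rw [NCM.coloring, hBe, NCM.bc_fb]] at h1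
  rw [show NCM.coloring A = NCM.c' (NCM.bc A) from rfl, hflip, h1] at h2
  cases bcol <;> simp at h2
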